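/- Let a be a point of the upper half-plane ℍ = {z : Im z > 0}, let p = (arg a)/π ∈ (0,1), C = |a|/(p^p (1−p)^{1−p}), and define g_a(z) = C (z−p)^p (z+1−p)^{1−p} using principal branches of the complex powers. Then g_a is a conformal bijection of ℍ onto ℍ ∖ L, where L is the line segment from 0 to a; moreover g_a extends continuously to ℝ with g_a(0) = a and g_a(p) = g_a(p−1) = 0. -/

import Mathlib

set_option maxHeartbeats 1000000

open Complex Set Metric

noncomputable section

/-- The (open) upper half-plane, as a subset of `ℂ`. -/
def UHP : Set ℂ := {z : ℂ | 0 < z.im}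

namespace SlitAux

open Real

/-- The holomorphic logarithm-combination whose exponential is (up to the constant) the
slit map. -/
def G (p : ℝ) (z : ℂ) : ℂ :=
  (p : ℂ) * Complex.log (z - p) + ((1 - p : ℝ) : ℂ) * Complex.log (z + 1 - p)

/-- The slit map itself. -/
def gfun (p C : ℝ) (z : ℂ) : ℂ :=
  (C : ℂ) * ((z - (p : ℂ)) ^ (p : ℂ) * (z + 1 - (p : ℂ)) ^ (1 - (p : ℂ)))

variable {p C : ℝ} {a z : ℂ}

lemma arg_pos_of_im_pos {w : ℂ} (hw : 0 < w.im) : 0 < w.arg := by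
  by_contra h
  push_neg at h
  have h1 : Real.sin w.arg ≤ 0 :=
    Real.sin_nonpos_of_nonpos_of_neg_pi_le h (Complex.neg_pi_lt_arg w).le
  rw [Complex.sin_arg] at h1
  have hw0 : w ≠ 0 := fun h0 => by simp [h0] at hw
  have habs : 0 < ‖w‖ := norm_pos_iff.mpr hw0
  have : 0 < w.im / ‖w‖ := div_pos hw habs
  linarith

lemma arg_lt_pi_of_im_pos {w : ℂ} (hw : 0 < w.im) : w.arg < Real.pi := by
  rcases lt_or_eq_of_le (Complex.arg_le_pi w) with h | h
  · exact h
  · exact absurd (Complex.arg_eq_pi_iff.mp h).2 (by linarith)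

lemma u_im (z : ℂ) : (z - (p : ℂ)).im = z.im := by simp
lemma v_im (z : ℂ) : (z + 1 - (p : ℂ)).im = z.im := by simp

lemma u_ne (hz : z ∈ UHP) : z - (p : ℂ) ≠ 0 := by
  intro h
  have := u_im (p := p) z
  rw [h] at this
  exact absurd hz (by simp [UHP, ← this])

lemma v_ne (hz : z ∈ UHP) : z + 1 - (p : ℂ) ≠ 0 := by
  intro h
  have := v_im (p := p) z
  rw [h] at this
  exact absurd hz (by simp [UHP, ← this])

lemma u_slit (hz : z ∈ UHP) : z - (p : ℂ) ∈ Complex.slitPlane := by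
  refine Complex.mem_slitPlane_iff.2 (Or.inr ?_)
  rw [u_im]
  exact ne_of_gt hz

lemma v_slit (hz : z ∈ UHP) : z + 1 - (p : ℂ) ∈ Complex.slitPlane := by
  refine Complex.mem_slitPlane_iff.2 (Or.inr ?_)
  rw [v_im]
  exact ne_of_gt hz

lemma expForm (hz : z ∈ UHP) : gfun p C z = (C : ℂ) * Complex.exp (G p z) := by
  have h1 : (1 : ℂ) - (p : ℂ) = ((1 - p : ℝ) : ℂ) := by push_cast; ring
  rw [gfun, Complex.cpow_def_of_ne_zero (u_ne hz), h1,
    Complex.cpow_def_of_ne_zero (v_ne hz), ← Complex.exp_add, G]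
  ring_nf

/-- value of a complex power with negative real base and real exponent. -/
lemma neg_real_cpow {r c : ℝ} (hr : 0 < r) :
    ((-r : ℝ) : ℂ) ^ (c : ℂ) = ((r ^ c : ℝ) : ℂ) * Complex.exp (((c * Real.pi : ℝ) : ℂ) * I) := by
  have hne : ((-r : ℝ) : ℂ) ≠ 0 := by
    simpa using ne_of_lt (neg_lt_zero.mpr hr)
  rw [Complex.cpow_def_of_ne_zero hne]
  have h1 : ‖((-r : ℝ) : ℂ)‖ = r := by
    rw [Complex.norm_real, Real.norm_eq_abs, abs_neg, abs_of_pos hr]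
  have h2 : ((-r : ℝ) : ℂ).arg = Real.pi := Complex.arg_ofReal_of_neg (neg_lt_zero.mpr hr)
  have hlog : Complex.log ((-r : ℝ) : ℂ) = ((Real.log r : ℝ) : ℂ) + (Real.pi : ℂ) * I := by
    apply Complex.ext
    · rw [Complex.log_re, h1]
      simp
    · rw [Complex.log_im, h2]
      simp
  rw [hlog, Real.rpow_def_of_pos hr]
  rw [add_mul, Complex.exp_add]
  push_cast
  ring_nf


lemma G_im (z : ℂ) :
    (G p z).im = p * (z - (p : ℂ)).arg + (1 - p) * (z + 1 - (p : ℂ)).arg := by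
  simp [G, Complex.add_im, Complex.mul_im, Complex.log_im]

lemma G_re (z : ℂ) :
    (G p z).re = p * Real.log (‖(z - (p : ℂ))‖)
      + (1 - p) * Real.log (‖(z + 1 - (p : ℂ))‖) := by
  simp [G, Complex.add_re, Complex.mul_re, Complex.log_re]

lemma G_im_mem (hp0 : 0 < p) (hp1 : p < 1) (hz : z ∈ UHP) :
    (G p z).im ∈ Ioo 0 Real.pi := by
  have hz' : 0 < z.im := hz
  have hau : 0 < (z - (p : ℂ)).arg := arg_pos_of_im_pos (by rw [u_im]; exact hz')
  have hau' : (z - (p : ℂ)).arg < Real.pi := arg_lt_pi_of_im_pos (by rw [u_im]; exact hz')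
  have hav : 0 < (z + 1 - (p : ℂ)).arg := arg_pos_of_im_pos (by rw [v_im]; exact hz')
  have hav' : (z + 1 - (p : ℂ)).arg < Real.pi := arg_lt_pi_of_im_pos (by rw [v_im]; exact hz')
  rw [G_im]
  constructor
  · have : 0 < p * (z - (p : ℂ)).arg := by positivity
    nlinarith
  · nlinarith

/-- modulus of the slit map, valid for every `z`. -/
lemma abs_gfun (hC0 : 0 < C) (z : ℂ) :
    ‖(gfun p C z)‖
      = C * (‖(z - (p : ℂ))‖ ^ p * ‖(z + 1 - (p : ℂ))‖ ^ (1 - p)) := by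
  have h1 : (1 : ℂ) - (p : ℂ) = ((1 - p : ℝ) : ℂ) := by push_cast; ring
  rw [gfun, h1, norm_mul, norm_mul, Complex.norm_cpow_real, Complex.norm_cpow_real,
    Complex.norm_real, Real.norm_eq_abs, abs_of_pos hC0]

lemma gfun_ne_zero (hC0 : 0 < C) (hz : z ∈ UHP) : gfun p C z ≠ 0 := by
  rw [expForm hz]
  exact mul_ne_zero (by exact_mod_cast hC0.ne') (Complex.exp_ne_zero _)

lemma gfun_decomp (hC0 : 0 < C) (hz : z ∈ UHP) :
    gfun p C z = ((C * Real.exp ((G p z).re) : ℝ) : ℂ)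
      * (Complex.cos ((G p z).im) + Complex.sin ((G p z).im) * I) := by
  rw [expForm hz, Complex.exp_eq_exp_re_mul_sin_add_cos]
  push_cast
  ring

lemma arg_gfun (hp0 : 0 < p) (hp1 : p < 1) (hC0 : 0 < C) (hz : z ∈ UHP) :
    (gfun p C z).arg = (G p z).im := by
  rw [gfun_decomp hC0 hz]
  have h1 : 0 < C * Real.exp ((G p z).re) := by positivity
  rw [Complex.arg_real_mul _ h1]
  exact Complex.arg_cos_add_sin_mul_I
    ⟨by linarith [(G_im_mem hp0 hp1 hz).1, Real.pi_pos], (G_im_mem hp0 hp1 hz).2.le⟩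

lemma gfun_im_pos (hp0 : 0 < p) (hp1 : p < 1) (hC0 : 0 < C) (hz : z ∈ UHP) :
    0 < (gfun p C z).im := by
  rw [expForm hz]
  have : ((C : ℂ) * Complex.exp (G p z)).im = C * (Complex.exp (G p z)).im := by
    simp [Complex.mul_im]
  rw [this, Complex.exp_im]
  have h1 := G_im_mem hp0 hp1 hz
  have h2 : 0 < Real.sin (G p z).im := Real.sin_pos_of_pos_of_lt_pi h1.1 h1.2
  positivity

lemma G_hasDerivAt (hz : z ∈ UHP) :
    HasDerivAt (G p)
      ((p : ℂ) * (z - p)⁻¹ + ((1 - p : ℝ) : ℂ) * (z + 1 - p)⁻¹) z := by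
  have h1 : HasDerivAt (fun w : ℂ => w - (p : ℂ)) 1 z := (hasDerivAt_id z).sub_const _
  have h2 : HasDerivAt (fun w : ℂ => w + 1 - (p : ℂ)) 1 z := by
    have := (hasDerivAt_id z).add_const ((1 : ℂ) - (p : ℂ))
    simpa [add_sub_assoc] using this
  have hl1 : HasDerivAt (fun w : ℂ => Complex.log (w - p)) ((z - p)⁻¹) z := by
    exact ((Complex.hasDerivAt_log (u_slit hz)).comp z h1).congr_deriv (mul_one _)
  have hl2 : HasDerivAt (fun w : ℂ => Complex.log (w + 1 - p)) ((z + 1 - p)⁻¹) z := by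
    have := (Complex.hasDerivAt_log (v_slit hz)).comp z h2
    exact this.congr_deriv (mul_one _)
  have hG : G p = fun w : ℂ =>
      (p : ℂ) * Complex.log (w - p) + ((1 - p : ℝ) : ℂ) * Complex.log (w + 1 - p) := rfl
  rw [hG]
  exact (hl1.const_mul ((p : ℂ))).add (hl2.const_mul (((1 - p : ℝ) : ℂ)))

lemma gfun_differentiableOn (hC0 : 0 < C) : DifferentiableOn ℂ (gfun p C) UHP := by
  intro z hz
  apply DifferentiableAt.differentiableWithinAt
  apply DifferentiableAt.const_mul
  apply DifferentiableAt.mul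
  · exact (differentiableAt_id.sub (differentiableAt_const _)).cpow
      (differentiableAt_const _) (u_slit hz)
  · exact ((differentiableAt_id.add (differentiableAt_const 1)).sub
      (differentiableAt_const _)).cpow (differentiableAt_const _) (v_slit hz)

lemma G_eq_of_gfun_eq (hp0 : 0 < p) (hp1 : p < 1) (hC0 : 0 < C) {z1 z2 : ℂ}
    (h1 : z1 ∈ UHP) (h2 : z2 ∈ UHP) (he : gfun p C z1 = gfun p C z2) :
    G p z1 = G p z2 := by
  rw [expForm h1, expForm h2] at he
  have hCne : (C : ℂ) ≠ 0 := by exact_mod_cast hC0.ne'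
  have hexp : Complex.exp (G p z1) = Complex.exp (G p z2) :=
    mul_left_cancel₀ hCne he
  obtain ⟨n, hn⟩ := Complex.exp_eq_exp_iff_exists_int.mp hexp
  have him : (G p z1).im = (G p z2).im + (n : ℝ) * (2 * Real.pi) := by
    have := congrArg Complex.im hn
    simpa [Complex.add_im, Complex.mul_im, Complex.mul_re] using this
  have hi1 := G_im_mem hp0 hp1 h1
  have hi2 := G_im_mem hp0 hp1 h2
  have hn0 : n = 0 := by
    by_contra h
    have h1' : (1 : ℝ) ≤ |(n : ℝ)| := by
      have := Int.one_le_abs (by omega : n ≠ 0)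
      exact_mod_cast this
    have hb : |(G p z1).im - (G p z2).im| < Real.pi := by
      rw [abs_lt]
      constructor <;> [linarith [hi1.1, hi2.2]; linarith [hi1.2, hi2.1]]
    have : |(G p z1).im - (G p z2).im| = |(n : ℝ)| * (2 * Real.pi) := by
      rw [him]
      rw [show (G p z2).im + (n:ℝ) * (2 * Real.pi) - (G p z2).im = (n:ℝ) * (2 * Real.pi) by ring]
      rw [abs_mul, abs_of_pos (by positivity : (0:ℝ) < 2 * Real.pi)]
    nlinarith [Real.pi_pos]
  rw [hn0] at hn
  simpa using hn

lemma gfun_injOn (hp0 : 0 < p) (hp1 : p < 1) (hC0 : 0 < C) :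
    InjOn (gfun p C) UHP := by
  intro z1 h1 z2 h2 he
  by_contra hne
  have hGeq : G p z1 = G p z2 := G_eq_of_gfun_eq hp0 hp1 hC0 h1 h2 he
  set d : ℂ := z2 - z1 with hd
  have hdne : d ≠ 0 := sub_ne_zero.mpr (fun h => hne h.symm)
  have hmem : ∀ t ∈ Icc (0:ℝ) 1, z1 + (t:ℂ) * d ∈ UHP := by
    intro t ht
    have : (z1 + (t:ℂ) * d).im = (1 - t) * z1.im + t * z2.im := by
      simp [hd, Complex.add_im, Complex.mul_im, Complex.sub_im]
      ring
    have hz1 : 0 < z1.im := h1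
    have hz2 : 0 < z2.im := h2
    show 0 < (z1 + (t:ℂ) * d).im
    rw [this]
    rcases ht with ⟨ht0, ht1⟩
    rcases eq_or_lt_of_le ht0 with h | h
    · rw [← h]; simpa using hz1
    · have e1 : 0 ≤ (1 - t) * z1.im := mul_nonneg (by linarith) hz1.le
      have e2 : 0 < t * z2.im := mul_pos h hz2
      linarith
  set r : ℝ → ℝ := fun t => ((G p (z1 + (t:ℂ) * d)) * (starRingEnd ℂ) d).im with hrdef
  have hderiv : ∀ t ∈ Icc (0:ℝ) 1,
      HasDerivAt r
        (((((p:ℂ) * (z1 + (t:ℂ) * d - p)⁻¹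
          + ((1-p:ℝ):ℂ) * (z1 + (t:ℂ) * d + 1 - p)⁻¹) * d) * (starRingEnd ℂ) d).im) t := by
    intro t ht
    have hγ : HasDerivAt (fun w : ℂ => z1 + w * d) d (t:ℂ) := by
      simpa using ((hasDerivAt_id ((t:ℂ))).mul_const d).const_add z1
    have hG' := (G_hasDerivAt (p := p) (hmem t ht)).comp (t:ℂ) hγ
    have hF : HasDerivAt (fun w : ℂ => G p (z1 + w * d) * (starRingEnd ℂ) d)
        ((((p:ℂ) * (z1 + (t:ℂ) * d - p)⁻¹
          + ((1-p:ℝ):ℂ) * (z1 + (t:ℂ) * d + 1 - p)⁻¹) * d) * (starRingEnd ℂ) d) (t:ℂ) :=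
      hG'.mul_const _
    have hFr := hF.comp_ofReal
    exact (Complex.imCLM.hasFDerivAt.comp_hasDerivAt t hFr)
  have hanti : StrictAntiOn r (Icc (0:ℝ) 1) := by
    apply strictAntiOn_of_deriv_neg (convex_Icc 0 1)
    · intro t ht
      exact (hderiv t ht).continuousAt.continuousWithinAt
    · intro t ht
      rw [interior_Icc] at ht
      rw [(hderiv t (Ioo_subset_Icc_self ht)).deriv]
      -- show the imaginary part is negative
      set w := z1 + (t:ℂ) * d with hw
      have hwim : 0 < w.im := hmem t (Ioo_subset_Icc_self ht)
      set W : ℂ := (p:ℂ) * (w - p)⁻¹ + ((1-p:ℝ):ℂ) * (w + 1 - p)⁻¹ with hW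
      have hWim : W.im < 0 := by
        have hu : 0 < (w - (p:ℂ)).im := by rw [u_im]; exact hwim
        have hv : 0 < (w + 1 - (p:ℂ)).im := by rw [v_im]; exact hwim
        have hu0 : w - (p:ℂ) ≠ 0 := fun h => by simp [h] at hu
        have hv0 : w + 1 - (p:ℂ) ≠ 0 := fun h => by simp [h] at hv
        have h1' : ((w - (p:ℂ))⁻¹).im < 0 := by
          rw [Complex.inv_im]
          have := Complex.normSq_pos.mpr hu0
          exact div_neg_of_neg_of_pos (by linarith) this
        have h2' : ((w + 1 - (p:ℂ))⁻¹).im < 0 := by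
          rw [Complex.inv_im]
          have := Complex.normSq_pos.mpr hv0
          exact div_neg_of_neg_of_pos (by linarith) this
        have e1 : ((p:ℂ) * (w - p)⁻¹).im = p * ((w - (p:ℂ))⁻¹).im := by
          simp [Complex.mul_im]
        have e2 : (((1-p:ℝ):ℂ) * (w + 1 - p)⁻¹).im = (1-p) * ((w + 1 - (p:ℂ))⁻¹).im := by
          simp [Complex.mul_im]
        rw [hW, Complex.add_im, e1, e2]
        have := mul_neg_of_pos_of_neg hp0 h1'
        have := mul_neg_of_pos_of_neg (by linarith : (0:ℝ) < 1 - p) h2'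
        linarith
      have hmc : (W * d) * (starRingEnd ℂ) d = W * ((Complex.normSq d : ℝ) : ℂ) := by
        rw [mul_assoc, Complex.mul_conj]
      rw [hmc]
      have : (W * ((Complex.normSq d : ℝ) : ℂ)).im = W.im * Complex.normSq d := by
        simp [Complex.mul_im]
      rw [this]
      exact mul_neg_of_neg_of_pos hWim (Complex.normSq_pos.mpr hdne)
  have h01 : (0:ℝ) ∈ Icc (0:ℝ) 1 := ⟨le_refl _, zero_le_one⟩
  have h11 : (1:ℝ) ∈ Icc (0:ℝ) 1 := ⟨zero_le_one, le_refl _⟩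
  have hlt : r 1 < r 0 := hanti h01 h11 zero_lt_one
  have hr0 : r 0 = ((G p z1) * (starRingEnd ℂ) d).im := by simp [hrdef]
  have hr1 : r 1 = ((G p z2) * (starRingEnd ℂ) d).im := by
    have : z1 + ((1:ℝ):ℂ) * d = z2 := by rw [hd]; push_cast; ring
    simp only [hrdef, this]
  rw [hr0, hr1, hGeq] at hlt
  exact lt_irrefl _ hlt

lemma sin_mul_gt (hp0 : 0 < p) (hp1 : p < 1) {s : ℝ} (hs0 : 0 < s) (hsπ : s < Real.pi) :
    p * Real.sin s < Real.sin (p * s) := by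
  have h := strictConcaveOn_sin_Icc.2 (x := 0) (y := s)
    ⟨le_refl 0, Real.pi_pos.le⟩ ⟨hs0.le, hsπ.le⟩ hs0.ne
    (by linarith : (0:ℝ) < 1 - p) hp0 (by ring)
  simpa using h

lemma gfun_avoid_segment (hp0 : 0 < p) (hp1 : p < 1) (hC0 : 0 < C)
    (harg : a.arg = p * Real.pi)
    (habs : ‖a‖ = C * (p ^ p * (1 - p) ^ (1 - p)))
    (hz : z ∈ UHP) : gfun p C z ∉ segment ℝ 0 a := by
  intro hmem
  rw [segment_eq_image] at hmem
  obtain ⟨t, ht, hte⟩ := hmem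
  simp only [smul_zero, zero_add] at hte
  have hte' : ((t : ℝ) : ℂ) * a = gfun p C z := by
    rw [← hte, Complex.real_smul]
  have ht0 : 0 < t := by
    rcases lt_or_eq_of_le ht.1 with h | h
    · exact h
    · exfalso
      apply gfun_ne_zero hC0 hz
      rw [← hte', ← h]
      simp
  -- notation
  set α := (z - (p : ℂ)).arg with hα
  set β := (z + 1 - (p : ℂ)).arg with hβ
  set A := ‖(z - (p : ℂ))‖ with hA
  set B := ‖(z + 1 - (p : ℂ))‖ with hB
  have hzim : 0 < z.im := hz
  have huim : (z - (p:ℂ)).im = z.im := u_im z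
  have hvim : (z + 1 - (p:ℂ)).im = z.im := v_im z
  have hu0 : z - (p:ℂ) ≠ 0 := u_ne hz
  have hv0 : z + 1 - (p:ℂ) ≠ 0 := v_ne hz
  have hA0 : 0 < A := norm_pos_iff.mpr hu0
  have hB0 : 0 < B := norm_pos_iff.mpr hv0
  have hα0 : 0 < α := arg_pos_of_im_pos (by rw [huim]; exact hzim)
  have hαπ : α < Real.pi := arg_lt_pi_of_im_pos (by rw [huim]; exact hzim)
  have hβ0 : 0 < β := arg_pos_of_im_pos (by rw [hvim]; exact hzim)
  have hβπ : β < Real.pi := arg_lt_pi_of_im_pos (by rw [hvim]; exact hzim)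
  -- argument equation
  have hargeq : p * α + (1 - p) * β = p * Real.pi := by
    have e1 : (gfun p C z).arg = p * α + (1 - p) * β := by
      rw [arg_gfun hp0 hp1 hC0 hz, G_im]
    have e2 : (gfun p C z).arg = p * Real.pi := by
      rw [← hte', Complex.arg_real_mul a ht0, harg]
    rw [← e1, e2]
  -- modulus inequality
  have habseq : A ^ p * B ^ (1 - p) ≤ p ^ p * (1 - p) ^ (1 - p) := by
    have e1 : ‖(gfun p C z)‖ = C * (A ^ p * B ^ (1 - p)) := abs_gfun hC0 z
    have e2 : ‖(gfun p C z)‖ = t * (C * (p ^ p * (1 - p) ^ (1 - p))) := by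
      rw [← hte', norm_mul, habs, Complex.norm_real, Real.norm_eq_abs, abs_of_pos ht0]
    have e3 : C * (A ^ p * B ^ (1 - p)) ≤ C * (p ^ p * (1 - p) ^ (1 - p)) := by
      rw [← e1, e2]
      have h4 : 0 < p ^ p * (1 - p) ^ (1 - p) := by
        have h5 := Real.rpow_pos_of_pos hp0 p
        have h6 := Real.rpow_pos_of_pos (by linarith : (0:ℝ) < 1 - p) (1 - p)
        positivity
      have h7 : 0 ≤ (1 - t) * (C * (p ^ p * (1 - p) ^ (1 - p))) :=
        mul_nonneg (sub_nonneg.mpr ht.2) (mul_pos hC0 h4).le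
      nlinarith [h7]
    exact le_of_mul_le_mul_left (by linarith) hC0
  -- trigonometric relations
  have hy1 : A * Real.sin α = z.im := by
    rw [hα, Complex.sin_arg, huim]
    field_simp
    exact hA
  have hy2 : B * Real.sin β = z.im := by
    rw [hβ, Complex.sin_arg, hvim]
    field_simp
    exact hB
  have hre : B * Real.cos β - A * Real.cos α = 1 := by
    have eB : B * Real.cos β = (z + 1 - (p:ℂ)).re := by
      rw [hβ, Complex.cos_arg hv0, ← hB]
      field_simp
    have eA : A * Real.cos α = (z - (p:ℂ)).re := by
      rw [hα, Complex.cos_arg hu0, ← hA]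
      field_simp
    rw [eB, eA]
    simp [Complex.add_re, Complex.sub_re]
  have hsinβ : 0 < Real.sin β := Real.sin_pos_of_pos_of_lt_pi hβ0 hβπ
  have hsinα : 0 < Real.sin α := Real.sin_pos_of_pos_of_lt_pi hα0 hαπ
  have hA' : A * Real.sin (α - β) = Real.sin β := by
    rw [Real.sin_sub]
    linear_combination Real.cos β * hy1 - Real.cos β * hy2 + Real.sin β * hre
  have hB' : B * Real.sin (α - β) = Real.sin α := by
    rw [Real.sin_sub]
    linear_combination Real.sin α * hre + Real.cos α * hy1 - Real.cos α * hy2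
  have hsinαβ : 0 < Real.sin (α - β) := by
    by_contra h
    push_neg at h
    have h8 := mul_nonpos_of_nonneg_of_nonpos hA0.le h
    rw [hA'] at h8
    linarith
  have hαβ : 0 < α - β := by
    by_contra h
    push_neg at h
    have : Real.sin (α - β) ≤ 0 :=
      Real.sin_nonpos_of_nonpos_of_neg_pi_le (by linarith) (by linarith)
    linarith
  -- the parameter s
  set s := Real.pi - α + β with hs
  have hs0 : 0 < s := by rw [hs]; linarith
  have hsπ : s < Real.pi := by rw [hs]; linarith
  have hsins : 0 < Real.sin s := Real.sin_pos_of_pos_of_lt_pi hs0 hsπ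
  have hβs : β = p * s := by rw [hs]; linear_combination hargeq
  have hαs : α = Real.pi - (1 - p) * s := by rw [hs]; linear_combination hargeq
  -- A > p and B > 1 - p
  have hsαβ : Real.sin (α - β) = Real.sin s := by
    have : α - β = Real.pi - s := by rw [hs]; ring
    rw [this, Real.sin_pi_sub]
  have hAgt : p < A := by
    have h1 : A * Real.sin s = Real.sin (p * s) := by
      rw [← hsαβ, hA', hβs]
    have h2 := sin_mul_gt hp0 hp1 hs0 hsπ
    have h3 : p * Real.sin s < A * Real.sin s := by linarith
    exact lt_of_mul_lt_mul_right h3 hsins.le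
  have hBgt : 1 - p < B := by
    have h1 : B * Real.sin s = Real.sin ((1 - p) * s) := by
      rw [← hsαβ, hB', hαs, Real.sin_pi_sub]
    have h2 := sin_mul_gt (by linarith : (0:ℝ) < 1 - p) (by linarith) hs0 hsπ
    have h3 : (1 - p) * Real.sin s < B * Real.sin s := by linarith
    exact lt_of_mul_lt_mul_right h3 hsins.le
  -- contradiction with the modulus inequality
  have c1 : p ^ p < A ^ p := Real.rpow_lt_rpow hp0.le hAgt hp0
  have c2 : (1 - p) ^ (1 - p) < B ^ (1 - p) :=
    Real.rpow_lt_rpow (by linarith) hBgt (by linarith)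
  have c3 : p ^ p * (1 - p) ^ (1 - p) < A ^ p * B ^ (1 - p) := by
    have d1 := Real.rpow_pos_of_pos hp0 p
    have d2 := Real.rpow_pos_of_pos (by linarith : (0:ℝ) < 1 - p) (1 - p)
    calc p ^ p * (1 - p) ^ (1 - p) < A ^ p * (1 - p) ^ (1 - p) := by
          exact mul_lt_mul_of_pos_right c1 d2
      _ < A ^ p * B ^ (1 - p) := by
          exact mul_lt_mul_of_pos_left c2 (lt_trans d1 c1)
  linarith

lemma gfun_real (hp0 : 0 < p) (hp1 : p < 1) (hC0 : 0 < C)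
    (harg : a.arg = p * Real.pi)
    (habs : ‖a‖ = C * (p ^ p * (1 - p) ^ (1 - p))) (x : ℝ) :
    (gfun p C (x : ℂ)).im = 0 ∨ gfun p C (x : ℂ) ∈ segment ℝ 0 a := by
  have hu : (x:ℂ) - (p:ℂ) = ((x - p : ℝ):ℂ) := by push_cast; ring
  have hv : (x:ℂ) + 1 - (p:ℂ) = ((x + 1 - p : ℝ):ℂ) := by push_cast; ring
  have he : (1:ℂ) - (p:ℂ) = ((1 - p : ℝ):ℂ) := by push_cast; ring
  rcases lt_trichotomy x p with hxp | hxp | hxp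
  · rcases lt_trichotomy x (p - 1) with hx1 | hx1 | hx1
    · -- x < p - 1 : both bases negative, value is a negative real number
      left
      have e1 : ((x - p : ℝ):ℂ) ^ (p:ℂ) = (((p - x) ^ p : ℝ):ℂ)
          * Complex.exp (((p * Real.pi : ℝ) : ℂ) * I) := by
        rw [show ((x - p : ℝ):ℂ) = ((-(p - x) : ℝ):ℂ) by push_cast; ring]
        exact neg_real_cpow (by linarith)
      have e2 : ((x + 1 - p : ℝ):ℂ) ^ (((1 - p : ℝ)):ℂ) = (((p - 1 - x) ^ (1 - p) : ℝ):ℂ)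
          * Complex.exp ((((1 - p) * Real.pi : ℝ) : ℂ) * I) := by
        rw [show ((x + 1 - p : ℝ):ℂ) = ((-(p - 1 - x) : ℝ):ℂ) by push_cast; ring]
        exact neg_real_cpow (by linarith)
      have hE : Complex.exp (((p * Real.pi : ℝ) : ℂ) * I)
          * Complex.exp ((((1 - p) * Real.pi : ℝ) : ℂ) * I) = -1 := by
        rw [← Complex.exp_add,
          show ((p * Real.pi : ℝ) : ℂ) * I + (((1 - p) * Real.pi : ℝ) : ℂ) * I
            = (Real.pi : ℂ) * I by push_cast; ring]
        exact Complex.exp_pi_mul_I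
      rw [gfun, hu, hv, he, e1, e2]
      rw [show (C:ℂ) * ((((p - x) ^ p : ℝ):ℂ) * Complex.exp (((p * Real.pi : ℝ) : ℂ) * I)
          * ((((p - 1 - x) ^ (1 - p) : ℝ):ℂ)
            * Complex.exp ((((1 - p) * Real.pi : ℝ) : ℂ) * I)))
        = (((C * ((p - x) ^ p * (p - 1 - x) ^ (1 - p)) : ℝ)):ℂ)
          * (Complex.exp (((p * Real.pi : ℝ) : ℂ) * I)
            * Complex.exp ((((1 - p) * Real.pi : ℝ) : ℂ) * I)) by push_cast; ring, hE]
      simp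
    · -- x = p - 1 : value 0
      left
      have hz : ((x + 1 - p : ℝ):ℂ) = 0 := by
        rw [hx1]; push_cast; ring
      have hne : ((1 - p : ℝ):ℂ) ≠ 0 := by
        intro h
        have : (1 - p : ℝ) = 0 := by exact_mod_cast h
        linarith
      rw [gfun, hv, hz, he, Complex.zero_cpow hne]
      simp
    · -- p - 1 < x < p : value on the slit
      right
      set r1 : ℝ := p - x with hr1
      set v' : ℝ := x + 1 - p with hv'
      have hr10 : 0 < r1 := by rw [hr1]; linarith
      have hv'0 : 0 < v' := by rw [hv']; linarith
      have e1 : ((x - p : ℝ):ℂ) ^ (p:ℂ) = ((r1 ^ p : ℝ):ℂ)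
          * Complex.exp (((p * Real.pi : ℝ) : ℂ) * I) := by
        rw [show ((x - p : ℝ):ℂ) = ((-r1 : ℝ):ℂ) by rw [hr1]; push_cast; ring]
        exact neg_real_cpow hr10
      have e2 : ((x + 1 - p : ℝ):ℂ) ^ (((1 - p : ℝ)):ℂ) = ((v' ^ (1 - p) : ℝ):ℂ) := by
        rw [← hv', ← Complex.ofReal_cpow hv'0.le]
      set M : ℝ := C * (r1 ^ p * v' ^ (1 - p)) with hM
      set K : ℝ := C * (p ^ p * (1 - p) ^ (1 - p)) with hK
      have hppK : 0 < p ^ p * (1 - p) ^ (1 - p) := by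
        have := Real.rpow_pos_of_pos hp0 p
        have := Real.rpow_pos_of_pos (by linarith : (0:ℝ) < 1 - p) (1 - p)
        positivity
      have hK0 : 0 < K := by rw [hK]; positivity
      have hM0 : 0 ≤ M := by
        have := Real.rpow_nonneg hr10.le p
        have := Real.rpow_nonneg hv'0.le (1 - p)
        rw [hM]; positivity
      -- AM-GM
      have hMK : M ≤ K := by
        have h1 := Real.geom_mean_le_arith_mean2_weighted
          (w₁ := p) (w₂ := 1 - p) (p₁ := r1 / p) (p₂ := v' / (1 - p))
          hp0.le (by linarith) (div_nonneg hr10.le hp0.le)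
          (div_nonneg hv'0.le (by linarith)) (by ring)
        have h2 : p * (r1 / p) + (1 - p) * (v' / (1 - p)) = 1 := by
          have hq : (1:ℝ) - p ≠ 0 := by linarith
          rw [hr1, hv']
          field_simp
          ring
        rw [h2] at h1
        have h3 : r1 ^ p * v' ^ (1 - p)
            = (p ^ p * (1 - p) ^ (1 - p)) * ((r1 / p) ^ p * (v' / (1 - p)) ^ (1 - p)) := by
          rw [Real.div_rpow hr10.le hp0.le, Real.div_rpow hv'0.le (by linarith)]
          have hpp := Real.rpow_pos_of_pos hp0 p
          have hqq := Real.rpow_pos_of_pos (by linarith : (0:ℝ) < 1 - p) (1 - p)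
          field_simp
          all_goals ring
        rw [hM, hK, h3]
        have h4 : (p ^ p * (1 - p) ^ (1 - p)) * ((r1 / p) ^ p * (v' / (1 - p)) ^ (1 - p))
            ≤ (p ^ p * (1 - p) ^ (1 - p)) * 1 :=
          mul_le_mul_of_nonneg_left h1 hppK.le
        nlinarith
      have hgx : gfun p C (x:ℂ) = ((M:ℝ):ℂ) * Complex.exp (((p * Real.pi : ℝ) : ℂ) * I) := by
        rw [gfun, hu, hv, he, e1, e2, hM]
        push_cast
        all_goals ring
      have haK : a = ((K:ℝ):ℂ) * Complex.exp (((p * Real.pi : ℝ) : ℂ) * I) := by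
        rw [← Complex.norm_mul_exp_arg_mul_I a, habs, harg]
        all_goals norm_cast
      rw [segment_eq_image]
      refine ⟨M / K, ⟨by positivity, by rw [div_le_one hK0]; exact hMK⟩, ?_⟩
      simp only [smul_zero, zero_add, Complex.real_smul]
      rw [haK, hgx]
      have hKne : (K:ℂ) ≠ 0 := by exact_mod_cast hK0.ne'
      push_cast
      field_simp
      all_goals ring
  · -- x = p : value 0
    left
    have hz : ((x - p : ℝ):ℂ) = 0 := by rw [hxp]; push_cast; ring
    have hne : (p:ℂ) ≠ 0 := by exact_mod_cast hp0.ne'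
    rw [gfun, hu, hz, Complex.zero_cpow hne]
    simp
  · -- p < x : positive real value
    left
    rw [gfun, hu, hv, he, ← Complex.ofReal_cpow (by linarith : (0:ℝ) ≤ x - p) p,
      ← Complex.ofReal_cpow (by linarith : (0:ℝ) ≤ x + 1 - p) (1 - p)]
    rw [show (C:ℂ) * ((((x - p) ^ p : ℝ):ℂ) * (((x + 1 - p) ^ (1 - p) : ℝ):ℂ))
      = (((C * ((x - p) ^ p * (x + 1 - p) ^ (1 - p)) : ℝ)):ℂ) by push_cast; ring]
    simp

lemma cpow_cont_aux {c : ℝ} (hc : 0 < c) (w0 : ℝ) :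
    ContinuousOn (fun z : ℂ => (z - (w0:ℂ)) ^ ((c:ℝ):ℂ)) {z : ℂ | 0 ≤ z.im} := by
  intro z0 hz0
  have hzim : 0 ≤ z0.im := hz0
  have hsub : Continuous fun z : ℂ => z - (w0:ℂ) := continuous_id.sub continuous_const
  by_cases h0 : z0 = (w0:ℂ)
  · -- base 0
    have hpair : ContinuousAt (fun z : ℂ => ((z - (w0:ℂ), ((c:ℝ):ℂ)) : ℂ × ℂ)) z0 :=
      (hsub.continuousAt).prodMk continuousAt_const
    have h1 : ContinuousAt (fun x : ℂ × ℂ => x.1 ^ x.2)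
        ((fun z : ℂ => ((z - (w0:ℂ), ((c:ℝ):ℂ)) : ℂ × ℂ)) z0) := by
      have : (fun z : ℂ => ((z - (w0:ℂ), ((c:ℝ):ℂ)) : ℂ × ℂ)) z0 = ((0:ℂ), ((c:ℝ):ℂ)) := by
        simp [h0]
      rw [this]
      exact Complex.continuousAt_cpow_zero_of_re_pos (by simpa using hc)
    exact (ContinuousAt.comp (x := z0) h1 hpair).continuousWithinAt
  · by_cases hsl : z0 - (w0:ℂ) ∈ Complex.slitPlane
    · exact (ContinuousAt.comp (x := z0) (continuousAt_cpow_const hsl)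
        (hsub.continuousAt : ContinuousAt (fun z : ℂ => z - (w0:ℂ)) z0)).continuousWithinAt
    · -- base on the negative real axis : use continuity of log from the closed upper half plane
      have hne : z0 - (w0:ℂ) ≠ 0 := sub_ne_zero.mpr h0
      have him : (z0 - (w0:ℂ)).im = 0 := by
        have := Complex.mem_slitPlane_iff.not.mp hsl
        push_neg at this
        simp only [Complex.sub_im, Complex.ofReal_im, sub_zero] at *
        exact this.2
      have hre : (z0 - (w0:ℂ)).re < 0 := by
        have h2 := Complex.mem_slitPlane_iff.not.mp hsl
        push_neg at h2
        rcases lt_trichotomy ((z0 - (w0:ℂ)).re) 0 with h | h | h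
        · exact h
        · exact absurd (Complex.ext h him) hne
        · exact absurd h (not_lt.mpr h2.1)
      have hlog : ContinuousWithinAt Complex.log {w : ℂ | 0 ≤ w.im} (z0 - (w0:ℂ)) :=
        Complex.continuousWithinAt_log_of_re_neg_of_im_zero hre him
      have hmaps : MapsTo (fun z : ℂ => z - (w0:ℂ)) {z : ℂ | 0 ≤ z.im} {w : ℂ | 0 ≤ w.im} := by
        intro z hz
        simpa using hz
      have hcomp : ContinuousWithinAt (fun z : ℂ => Complex.log (z - (w0:ℂ)))
          {z : ℂ | 0 ≤ z.im} z0 :=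
        by have := ContinuousWithinAt.comp (x := z0) hlog (hsub.continuousWithinAt :
             ContinuousWithinAt (fun z : ℂ => z - (w0:ℂ)) {z : ℂ | 0 ≤ z.im} z0) hmaps
           exact this
      have hF : ContinuousWithinAt
          (fun z : ℂ => Complex.exp (Complex.log (z - (w0:ℂ)) * ((c:ℝ):ℂ)))
          {z : ℂ | 0 ≤ z.im} z0 :=
        Complex.continuous_exp.continuousAt.comp_continuousWithinAt
          (hcomp.mul continuousWithinAt_const)
      apply hF.congr_of_eventuallyEq_of_mem ?_ hz0
      have hne0 : ∀ᶠ z in nhdsWithin z0 {z : ℂ | 0 ≤ z.im}, z ≠ (w0:ℂ) :=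
        ((isOpen_ne : IsOpen {z : ℂ | z ≠ (w0:ℂ)}).eventually_mem h0).filter_mono
          nhdsWithin_le_nhds
      exact hne0.mono fun z hz => Complex.cpow_def_of_ne_zero (sub_ne_zero.mpr hz) _

lemma gfun_continuousOn (hp0 : 0 < p) (hp1 : p < 1) :
    ContinuousOn (gfun p C) {z : ℂ | 0 ≤ z.im} := by
  have hfeq : gfun p C = fun z : ℂ =>
      (C : ℂ) * ((z - ((p:ℝ):ℂ)) ^ ((p:ℝ):ℂ) * (z - (((p - 1 : ℝ)):ℂ)) ^ (((1 - p : ℝ)):ℂ)) := by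
    funext z
    rw [gfun, show z + 1 - ((p:ℝ):ℂ) = z - ((p - 1 : ℝ):ℂ) by push_cast; ring,
      show (1:ℂ) - ((p:ℝ):ℂ) = ((1 - p : ℝ):ℂ) by push_cast; ring]
  rw [hfeq]
  exact continuousOn_const.mul
    ((cpow_cont_aux hp0 p).mul (cpow_cont_aux (by linarith : (0:ℝ) < 1 - p) (p - 1)))

lemma gfun_lower (hp0 : 0 < p) (hp1 : p < 1) (hC0 : 0 < C) (z : ℂ) :
    C * (‖z‖ - 2) ≤ ‖(gfun p C z)‖ := by
  rcases le_or_gt (‖z‖) 2 with h | h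
  · have h1 : C * (‖z‖ - 2) ≤ 0 :=
      mul_nonpos_of_nonneg_of_nonpos hC0.le (by linarith)
    exact h1.trans (norm_nonneg _)
  · set m := ‖z‖ - 2 with hm
    have hm0 : 0 < m := by rw [hm]; linarith
    have hA : m ≤ ‖(z - (p:ℂ))‖ := by
      have h2 : ‖z‖ - ‖((p:ℂ))‖ ≤ ‖(z - (p:ℂ))‖ := by
        exact norm_sub_norm_le z ((p:ℂ))
      have h3 : ‖((p:ℂ))‖ = p := by
        rw [Complex.norm_real, Real.norm_eq_abs, abs_of_pos hp0]
      rw [h3] at h2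
      rw [hm]
      linarith
    have hB : m ≤ ‖(z + 1 - (p:ℂ))‖ := by
      have h4 : z + 1 - (p:ℂ) = z - ((p - 1 : ℝ):ℂ) := by push_cast; ring
      have h2 : ‖z‖ - ‖(((p - 1:ℝ)):ℂ)‖ ≤ ‖(z - ((p-1:ℝ):ℂ))‖ := by
        exact norm_sub_norm_le z (((p - 1:ℝ)):ℂ)
      have h3 : ‖(((p - 1:ℝ)):ℂ)‖ = 1 - p := by
        rw [Complex.norm_real, Real.norm_eq_abs, abs_of_neg (by linarith : p - 1 < 0)]
        ring
      rw [h3] at h2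
      rw [hm, h4]
      linarith
    have key : m ≤ ‖(z - (p:ℂ))‖ ^ p * ‖(z + 1 - (p:ℂ))‖ ^ (1 - p) := by
      have e1 : m = m ^ p * m ^ (1 - p) := by
        rw [← Real.rpow_add hm0]
        norm_num
      rw [e1]
      have c1 : m ^ p ≤ ‖(z - (p:ℂ))‖ ^ p := Real.rpow_le_rpow hm0.le hA hp0.le
      have c2 : m ^ (1-p) ≤ ‖(z + 1 - (p:ℂ))‖ ^ (1-p) :=
        Real.rpow_le_rpow hm0.le hB (by linarith)
      have d1 : 0 ≤ m ^ p := Real.rpow_nonneg hm0.le _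
      have d2 : 0 ≤ m ^ (1-p) := Real.rpow_nonneg hm0.le _
      nlinarith
    rw [abs_gfun hC0]
    exact mul_le_mul_of_nonneg_left key hC0.le

lemma outer_preconnected (ha0 : 0 < ‖a‖) :
    IsPreconnected {w : ℂ | 0 < w.im ∧ ‖a‖ < ‖w‖} := by
  have himg : {w : ℂ | 0 < w.im ∧ ‖a‖ < ‖w‖}
      = (fun v : ℂ => -v⁻¹) '' ({v : ℂ | 0 < v.im} ∩ Metric.ball 0 (‖a‖)⁻¹) := by
    ext w
    constructor
    · rintro ⟨h1, h2⟩
      have hw0 : w ≠ 0 := fun h => by simp [h] at h1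
      have hwabs : 0 < ‖w‖ := norm_pos_iff.mpr hw0
      refine ⟨-w⁻¹, ⟨?_, ?_⟩, ?_⟩
      · show 0 < (-w⁻¹).im
        rw [Complex.neg_im, Complex.inv_im]
        have hns := Complex.normSq_pos.mpr hw0
        rw [neg_div, neg_neg]
        exact div_pos h1 hns
      · rw [Metric.mem_ball, Complex.dist_eq, sub_zero, norm_neg, norm_inv]
        exact inv_strictAnti₀ ha0 h2
      · show -(-w⁻¹)⁻¹ = w
        rw [inv_neg, neg_neg, inv_inv]
    · rintro ⟨v, ⟨h1, h2⟩, rfl⟩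
      have hv0 : v ≠ 0 := fun h => by simp [h] at h1
      have hvabs : 0 < ‖v‖ := norm_pos_iff.mpr hv0
      rw [Metric.mem_ball, Complex.dist_eq, sub_zero] at h2
      constructor
      · show 0 < (-v⁻¹).im
        rw [Complex.neg_im, Complex.inv_im]
        have hns := Complex.normSq_pos.mpr hv0
        rw [neg_div, neg_neg]
        exact div_pos h1 hns
      · rw [norm_neg, norm_inv]
        rw [lt_inv_comm₀ hvabs ha0] at h2
        exact h2
  rw [himg]
  apply IsPreconnected.image
  · exact ((convex_halfSpace_im_gt 0).inter (convex_ball 0 _)).isPreconnected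
  · intro v hv
    have hv0 : v ≠ 0 := fun h => by simp [h] at hv
    exact ((continuousAt_inv₀ hv0).neg).continuousWithinAt

lemma omega_preconnected (ha : a ∈ UHP) : IsPreconnected (UHP \ segment ℝ 0 a) := by
  have haim : 0 < a.im := ha
  have ha0 : 0 < ‖a‖ := norm_pos_iff.mpr (fun h => by simp [h] at haim)
  set R := ‖a‖ with hR
  set Outer : Set ℂ := {w : ℂ | 0 < w.im ∧ R < ‖w‖} with hOuter
  have hOuterSub : Outer ⊆ UHP \ segment ℝ 0 a := by
    rintro w ⟨h1, h2⟩
    refine ⟨h1, ?_⟩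
    intro hseg
    rw [segment_eq_image] at hseg
    obtain ⟨θ, hθ, hw⟩ := hseg
    simp only [smul_zero, zero_add, Complex.real_smul] at hw
    have : ‖w‖ ≤ R := by
      rw [← hw, norm_mul, Complex.norm_real, Real.norm_eq_abs, _root_.abs_of_nonneg hθ.1, hR]
      nlinarith [hθ.2, ha0]
    linarith
  have hx0 : (((R + 1 : ℝ)) : ℂ) * I ∈ Outer := by
    constructor
    · show 0 < ((((R + 1 : ℝ)) : ℂ) * I).im
      simp
      linarith
    · rw [norm_mul, Complex.norm_I, Complex.norm_real, Real.norm_eq_abs, mul_one, abs_of_pos (by linarith)]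
      linarith
  apply isPreconnected_of_forall ((((R + 1 : ℝ)) : ℂ) * I)
  intro y hy
  have hyim : 0 < y.im := hy.1
  have hy0 : y ≠ 0 := fun h => by simp [h] at hyim
  have hyabs : 0 < ‖y‖ := norm_pos_iff.mpr hy0
  set sy : ℝ := (R + 1) / ‖y‖ + 1 with hsy
  have hsy1 : 1 ≤ sy := by
    rw [hsy]
    have : 0 ≤ (R + 1) / ‖y‖ := div_nonneg (by linarith) hyabs.le
    linarith
  have hsyy : sy • y ∈ Outer := by
    constructor
    · show 0 < (sy • y).im
      rw [Complex.real_smul]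
      simp only [Complex.mul_im, Complex.ofReal_re, Complex.ofReal_im]
      have : 0 < sy := by linarith
      nlinarith
    · rw [Complex.real_smul, norm_mul, Complex.norm_real, Real.norm_eq_abs, abs_of_pos (by linarith : 0 < sy), hsy]
      rw [add_mul, div_mul_cancel₀ _ hyabs.ne', one_mul]
      linarith
  refine ⟨segment ℝ y (sy • y) ∪ Outer, ?_, Or.inr hx0, Or.inl (left_mem_segment ℝ y _), ?_⟩
  · rintro w (hw | hw)
    · rw [segment_eq_image] at hw
      obtain ⟨τ, hτ, hww⟩ := hw
      simp only [smul_smul] at hww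
      have hcy : w = ((1 - τ) + τ * sy) • y := by
        rw [← hww, ← add_smul]
      set c : ℝ := (1 - τ) + τ * sy with hc
      have hc1 : 1 ≤ c := by
        rw [hc]
        nlinarith [hτ.1, hτ.2, hsy1]
      have hc0 : 0 < c := by linarith
      constructor
      · show 0 < w.im
        rw [hcy, Complex.real_smul]
        simp only [Complex.mul_im, Complex.ofReal_re, Complex.ofReal_im]
        nlinarith
      · intro hseg
        rw [segment_eq_image] at hseg
        obtain ⟨θ, hθ, hwa⟩ := hseg
        simp only [smul_zero, zero_add] at hwa
        -- then y = (θ/c) • a, contradicting y ∉ segment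
        apply hy.2
        rw [segment_eq_image]
        refine ⟨θ / c, ⟨div_nonneg hθ.1 hc0.le, ?_⟩, ?_⟩
        · rw [div_le_one hc0]
          linarith [hθ.2]
        · simp only [smul_zero, zero_add]
          have : θ • a = c • y := by rw [hwa, hcy]
          have h5 : (c⁻¹ * θ) • a = y := by
            rw [← smul_smul, this, smul_smul, inv_mul_cancel₀ hc0.ne', one_smul]
          rw [div_eq_inv_mul, h5]
    · exact hOuterSub hw
  · apply IsPreconnected.union (sy • y)
    · exact right_mem_segment ℝ y _
    · exact hsyy
    · exact (convex_segment y (sy • y)).isPreconnected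
    · exact outer_preconnected ha0

lemma gfun_surjOn (hp0 : 0 < p) (hp1 : p < 1) (hC0 : 0 < C)
    (ha : a ∈ UHP)
    (harg : a.arg = p * Real.pi)
    (habs : ‖a‖ = C * (p ^ p * (1 - p) ^ (1 - p))) :
    UHP \ segment ℝ 0 a ⊆ gfun p C '' UHP := by
  have hUo : IsOpen UHP := isOpen_lt continuous_const Complex.continuous_im
  have hana := (gfun_differentiableOn (p := p) hC0).analyticOnNhd hUo
  have hpre : IsPreconnected UHP := (convex_halfSpace_im_gt 0).isPreconnected
  have hI : Complex.I ∈ UHP := by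
    show (0:ℝ) < Complex.I.im
    simp
  have himg_open : IsOpen (gfun p C '' UHP) := by
    rcases hana.is_constant_or_isOpen hpre with ⟨w, hw⟩ | h
    · exfalso
      have h2 : (2 * Complex.I) ∈ UHP := by
        show (0:ℝ) < (2 * Complex.I).im
        simp
      have h3 := gfun_injOn hp0 hp1 hC0 hI h2 (by rw [hw _ hI, hw _ h2])
      have : (1:ℝ) = 2 := by
        have := congrArg Complex.im h3
        simpa using this
      norm_num at this
    · exact h UHP subset_rfl hUo
  -- every point of Ω in the closure of the image lies in the image
  have hclose : ∀ w ∈ UHP \ segment ℝ 0 a,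
      w ∈ closure (gfun p C '' UHP) → w ∈ gfun p C '' UHP := by
    intro w hw hwc
    rw [mem_closure_iff_seq_limit] at hwc
    obtain ⟨u, humem, hulim⟩ := hwc
    have humem' : ∀ n, ∃ z, z ∈ UHP ∧ gfun p C z = u n := fun n => humem n
    choose zf hzf hgzf using humem'
    obtain ⟨N, hN⟩ := Metric.tendsto_atTop.mp hulim 1 one_pos
    set R : ℝ := 2 + (‖w‖ + 1) / C with hRdef
    have hzb : ∀ n, ‖(zf (n + N))‖ ≤ R := by
      intro n
      have h1 := gfun_lower hp0 hp1 hC0 (zf (n + N))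
      rw [hgzf] at h1
      have h2 : dist (u (n + N)) w < 1 := hN (n + N) (Nat.le_add_left N n)
      rw [Complex.dist_eq] at h2
      have h3 : ‖(u (n + N))‖ ≤ ‖w‖ + 1 := by
        calc ‖(u (n+N))‖ ≤ ‖w‖ + ‖(u (n+N) - w)‖ := by
              have h6 := norm_add_le (u (n+N) - w) w
              rw [sub_add_cancel] at h6
              linarith
          _ ≤ ‖w‖ + 1 := by linarith
      have h4 : C * (‖(zf (n + N))‖ - 2) ≤ ‖w‖ + 1 := by linarith
      rw [hRdef]
      rw [mul_comm] at h4
      have h5 := (le_div_iff₀ hC0).mpr h4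
      linarith
    set K : Set ℂ := Metric.closedBall 0 R ∩ {z : ℂ | 0 ≤ z.im} with hK
    have hKc : IsCompact K :=
      (isCompact_closedBall 0 R).inter_right (isClosed_le continuous_const Complex.continuous_im)
    have hz'K : ∀ n, zf (n + N) ∈ K := by
      intro n
      constructor
      · rw [Metric.mem_closedBall, Complex.dist_eq, sub_zero]
        exact hzb n
      · show (0:ℝ) ≤ (zf (n + N)).im
        exact (hzf (n + N)).le
    obtain ⟨zs, hzsK, φ, hφ, hzlim⟩ := hKc.tendsto_subseq hz'K
    have hglim : Filter.Tendsto (fun n => gfun p C (zf (φ n + N))) Filter.atTop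
        (nhds (gfun p C zs)) := by
      have hcont := (gfun_continuousOn (C := C) hp0 hp1) zs hzsK.2
      apply hcont.tendsto.comp
      apply tendsto_nhdsWithin_of_tendsto_nhds_of_eventually_within _ hzlim
      exact Filter.Eventually.of_forall fun n =>
        (show (0:ℝ) ≤ (zf (φ n + N)).im from (hzf (φ n + N)).le)
    have hglim2 : Filter.Tendsto (fun n => gfun p C (zf (φ n + N))) Filter.atTop (nhds w) := by
      have he : (fun n => gfun p C (zf (φ n + N))) = fun n => u (φ n + N) :=
        funext fun n => hgzf _
      rw [he]
      have : Filter.Tendsto (fun n => φ n + N) Filter.atTop Filter.atTop :=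
        Filter.tendsto_atTop_mono (fun n => le_trans hφ.le_apply (Nat.le_add_right _ _))
          Filter.tendsto_id
      exact hulim.comp this
    have heqw : gfun p C zs = w := tendsto_nhds_unique hglim hglim2
    have hzsim : (0:ℝ) ≤ zs.im := hzsK.2
    rcases lt_or_eq_of_le hzsim with him | him
    · exact ⟨zs, him, heqw⟩
    · exfalso
      have hzs : zs = ((zs.re : ℝ) : ℂ) := Complex.ext (by simp) (by simp [← him])
      rcases gfun_real hp0 hp1 hC0 harg habs zs.re with h | h
      · rw [← hzs, heqw] at h
        have := hw.1
        show False
        have hwim : (0:ℝ) < w.im := hw.1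
        linarith [hwim, h.le, h.ge]
      · rw [← hzs, heqw] at h
        exact hw.2 h
  -- clopen argument on the connected set Ω
  have hconn := omega_preconnected (a := a) ha
  have hdisj : Disjoint (gfun p C '' UHP) (closure (gfun p C '' UHP))ᶜ :=
    disjoint_compl_right.mono_left subset_closure
  have hsub : UHP \ segment ℝ 0 a ⊆ gfun p C '' UHP ∪ (closure (gfun p C '' UHP))ᶜ := by
    intro w hw
    by_cases hc : w ∈ closure (gfun p C '' UHP)
    · exact Or.inl (hclose w hw hc)
    · exact Or.inr hc
  have hne : ((UHP \ segment ℝ 0 a) ∩ (gfun p C '' UHP)).Nonempty :=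
    ⟨gfun p C Complex.I,
      ⟨⟨gfun_im_pos hp0 hp1 hC0 hI, gfun_avoid_segment hp0 hp1 hC0 harg habs hI⟩,
        mem_image_of_mem _ hI⟩⟩
  exact hconn.subset_left_of_subset_union himg_open isClosed_closure.isOpen_compl
    hdisj hsub hne

end SlitAux

open SlitAux

/-- The slit map `g_a(z) = C (z−p)^p (z+1−p)^{1−p}` is a conformal bijection of `ℍ`
onto `ℍ ∖ L`, where `L` is the segment from `0` to `a`; it extends continuously to `ℝ`
with `g_a(0) = a` and `g_a(p) = g_a(p−1) = 0`. -/
theorem slit_map_conformal_bijection (a : ℂ) (ha : a ∈ UHP)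
    (p : ℝ) (hp : p = Complex.arg a / Real.pi)
    (C : ℝ) (hC : C = ‖a‖ / (p ^ p * (1 - p) ^ (1 - p)))
    (g : ℂ → ℂ)
    (hg : g = fun z => (C : ℂ) * ((z - (p : ℂ)) ^ (p : ℂ) * (z + 1 - (p : ℂ)) ^ (1 - (p : ℂ)))) :
    DifferentiableOn ℂ g UHP ∧ Set.InjOn g UHP ∧
      g '' UHP = UHP \ segment ℝ (0 : ℂ) a ∧
      ContinuousOn g {z : ℂ | 0 ≤ z.im} ∧
      g 0 = a ∧ g ((p : ℝ) : ℂ) = 0 ∧ g (((p : ℝ) : ℂ) - 1) = 0 := by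
  have ha' : 0 < a.im := ha
  have hpi := Real.pi_pos
  -- basic facts about p
  have harg : a.arg = p * Real.pi := by
    rw [hp]; field_simp
  have hp0 : 0 < p := by
    rw [hp]
    exact div_pos (arg_pos_of_im_pos ha') hpi
  have hp1 : p < 1 := by
    rw [hp]
    rw [div_lt_one hpi]
    exact arg_lt_pi_of_im_pos ha'
  have hppq : 0 < p ^ p * (1 - p) ^ (1 - p) := by
    have h1 : (0:ℝ) < p ^ p := Real.rpow_pos_of_pos hp0 _
    have h2 : (0:ℝ) < (1 - p) ^ (1 - p) := Real.rpow_pos_of_pos (by linarith) _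
    positivity
  have habs0 : 0 < ‖a‖ := norm_pos_iff.mpr (fun h0 => by simp [h0] at ha')
  have hC0 : 0 < C := by rw [hC]; positivity
  have habs : ‖a‖ = C * (p ^ p * (1 - p) ^ (1 - p)) := by
    rw [hC]; field_simp
    exact (div_self (Real.rpow_pos_of_pos (by linarith : (0:ℝ) < 1 - p) _).ne').symm
  -- replace g by gfun
  have hgf : g = gfun p C := by rw [hg]; rfl
  subst hgf
  refine ⟨gfun_differentiableOn hC0, gfun_injOn hp0 hp1 hC0, ?_, gfun_continuousOn hp0 hp1,
    ?_, ?_, ?_⟩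
  · -- image identity
    apply Set.Subset.antisymm
    · rintro w ⟨z, hz, rfl⟩
      exact ⟨gfun_im_pos hp0 hp1 hC0 hz, gfun_avoid_segment hp0 hp1 hC0 harg habs hz⟩
    · exact gfun_surjOn hp0 hp1 hC0 ha harg habs
  · -- g 0 = a
    have h0 : gfun p C 0 = (C : ℂ) * (((0 : ℂ) - p) ^ (p : ℂ) * ((0 : ℂ) + 1 - p) ^ (1 - (p : ℂ))) := rfl
    have hu : ((0 : ℂ) - (p : ℂ)) = ((-p : ℝ) : ℂ) := by push_cast; ring
    have hv : ((0 : ℂ) + 1 - (p : ℂ)) = ((1 - p : ℝ) : ℂ) := by push_cast; ring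
    have h2 : ((1 : ℂ) - (p : ℂ)) = ((1 - p : ℝ) : ℂ) := by push_cast; ring
    rw [h0, hu, hv, h2, neg_real_cpow hp0, ← Complex.ofReal_cpow (by linarith : (0:ℝ) ≤ 1 - p)]
    -- now : C * ((p^p) * exp(pπ i) * (1-p)^(1-p)) = a
    rw [← Complex.norm_mul_exp_arg_mul_I a, harg, habs]
    push_cast
    ring
  · -- g p = 0
    have : gfun p C ((p : ℝ) : ℂ) = (C : ℂ) * ((0 : ℂ) ^ (p : ℂ) * (((p : ℝ) : ℂ) + 1 - p) ^ (1 - (p : ℂ))) := by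
      rw [gfun]; ring_nf
    rw [this, Complex.zero_cpow (by exact_mod_cast hp0.ne')]
    ring
  · -- g (p-1) = 0
    have : gfun p C (((p : ℝ) : ℂ) - 1) = (C : ℂ) * (((((p : ℝ) : ℂ) - 1) - p) ^ (p : ℂ) * (0 : ℂ) ^ (1 - (p : ℂ))) := by
      rw [gfun]; ring_nf
    rw [this, Complex.zero_cpow]
    · ring
    · intro h
      have : (1 : ℂ) = (p : ℂ) := sub_eq_zero.mp h
      have : (1 : ℝ) = p := by exact_mod_cast this
      linarith
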